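/- Under the same Hölder-smoothness setting as above with constants ℓ, L and ν ∈ (1,2], let x̂^ν = argmin_{y∈𝒳}[F(y) + (ρ/ν)‖y−x‖^ν]. Then for any ρ₁ > 0 and any ρ > (ρ₁ + 2ℓ)/ν: ‖x̂^ν − x‖^ν ≤ ((ν−1)/(ν ρ₁^(1/(ν−1)))) · 𝒟_{ρ₁}^ν(x) / (ρ − (ρ₁ + 2ℓ)/ν). -/

import Mathlib

open scoped RealInnerProductSpace
open Filter Topology

theorem prox_point_FBE_bound {d : ℕ} (ν ℓ L ρ ρ₁ : ℝ) (hν1 : 1 < ν) (hν2 : ν ≤ 2)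
    (hρ₁ : 0 < ρ₁) (hρ : (ρ₁ + 2 * ℓ) / ν < ρ)
    (𝒳 : Set (EuclideanSpace ℝ (Fin d))) (hclosed : IsClosed 𝒳) (hconv : Convex ℝ 𝒳)
    (F : EuclideanSpace ℝ (Fin d) → ℝ)
    (F' : EuclideanSpace ℝ (Fin d) → EuclideanSpace ℝ (Fin d))
    (hgrad : ∀ x ∈ 𝒳, HasGradientAt F (F' x) x)
    (hHolder : ∀ x ∈ 𝒳, ∀ y ∈ 𝒳,
      -(ℓ / ν) * ‖x - y‖ ^ ν ≤ F x - F y - ⟪F' y, x - y⟫ ∧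
        F x - F y - ⟪F' y, x - y⟫ ≤ (L / ν) * ‖x - y‖ ^ ν)
    (x : EuclideanSpace ℝ (Fin d)) (hx : x ∈ 𝒳)
    -- x̂ is the order-ν proximal point of x
    (xhat : EuclideanSpace ℝ (Fin d)) (hxhat : xhat ∈ 𝒳)
    (hxhatmin : ∀ y ∈ 𝒳, F xhat + (ρ / ν) * ‖xhat - x‖ ^ ν
      ≤ F y + (ρ / ν) * ‖y - x‖ ^ ν)
    -- yQ minimizes y ↦ ⟪∇F(x), y - x⟫ + (ρ₁/ν)‖y - x‖^ν over 𝒳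
    (yQ : EuclideanSpace ℝ (Fin d)) (hyQ : yQ ∈ 𝒳)
    (hyQmin : ∀ y ∈ 𝒳, ⟪F' x, yQ - x⟫ + (ρ₁ / ν) * ‖yQ - x‖ ^ ν
      ≤ ⟪F' x, y - x⟫ + (ρ₁ / ν) * ‖y - x‖ ^ ν) :
    ‖xhat - x‖ ^ ν ≤ ((ν - 1) / (ν * ρ₁ ^ (1 / (ν - 1)))) *
        (-(ν * ρ₁ ^ (1 / (ν - 1)) / (ν - 1)) *
          (⟪F' x, yQ - x⟫ + (ρ₁ / ν) * ‖yQ - x‖ ^ ν)) / (ρ - (ρ₁ + 2 * ℓ) / ν) := by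
  have hν0 : (0:ℝ) < ν := by linarith
  set t : ℝ := ‖xhat - x‖ ^ ν with ht_def
  have ht : 0 ≤ t := Real.rpow_nonneg (norm_nonneg _) ν
  set c0 : ℝ := ⟪F' xhat, x - xhat⟫ with hc0_def
  -- Key pointwise inequality for s ∈ (0,1)
  have key : ∀ s ∈ Set.Ioo (0:ℝ) 1,
      (((ρ/ν) * (1 - (1-s)^ν) - (L/ν) * s^ν) / s) * t ≤ c0 := by
    intro s hs
    obtain ⟨hs0, hs1⟩ := hs
    set ys := xhat + s • (x - xhat) with hys_def
    have hysmem : ys ∈ 𝒳 := by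
      have := hconv hxhat hx (by linarith : (0:ℝ) ≤ 1 - s) (le_of_lt hs0) (by ring)
      convert this using 1
      rw [hys_def]
      module
    have hysx : ys - x = (1-s) • (xhat - x) := by rw [hys_def]; module
    have hysxhat : ys - xhat = s • (x - xhat) := by rw [hys_def]; module
    have hnorm1 : ‖ys - x‖ ^ ν = (1-s)^ν * t := by
      rw [hysx, norm_smul, Real.norm_eq_abs, abs_of_nonneg (by linarith : (0:ℝ) ≤ 1 - s),
        Real.mul_rpow (by linarith) (norm_nonneg _)]
    have hnorm2 : ‖ys - xhat‖ ^ ν = s^ν * t := by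
      rw [hysxhat, norm_smul, Real.norm_eq_abs, abs_of_nonneg hs0.le,
        Real.mul_rpow hs0.le (norm_nonneg _), norm_sub_rev]
    have h1 : F xhat + (ρ/ν) * t ≤ F ys + (ρ/ν) * ((1-s)^ν * t) := by
      have := hxhatmin ys hysmem
      rwa [hnorm1] at this
    have h2 : F ys - F xhat - s * c0 ≤ (L/ν) * (s^ν * t) := by
      have := (hHolder ys hysmem xhat hxhat).2
      rwa [hnorm2, hysxhat, real_inner_smul_right] at this
    rw [div_mul_eq_mul_div, div_le_iff₀ hs0]
    nlinarith [h1, h2]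
  -- limit as s → 0+
  have hslope : Tendsto (fun s : ℝ => (1 - (1-s)^ν)/s) (𝓝[>] (0:ℝ)) (𝓝 ν) := by
    have hd : HasDerivAt (fun s : ℝ => 1 - (1-s)^ν) ν 0 := by
      have h0 : HasDerivAt (fun s : ℝ => 1 - s) (-1) 0 := (hasDerivAt_id 0).const_sub 1
      have h1 : HasDerivAt (fun u : ℝ => u ^ ν) (ν * (1:ℝ) ^ (ν - 1)) ((1:ℝ) - 0) := by
        simpa using Real.hasDerivAt_rpow_const (x := (1:ℝ)) (p := ν) (Or.inl one_ne_zero)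
      have h2 := (h1.comp 0 h0).const_sub 1
      simpa [Real.one_rpow] using h2
    rw [hasDerivAt_iff_tendsto_slope] at hd
    have hd' := hd.mono_left (nhdsWithin_mono 0 (fun s hs => ne_of_gt hs))
    refine hd'.congr fun s => ?_
    simp [slope_def_field, Real.one_rpow, div_eq_mul_inv]
  have hpow : Tendsto (fun s : ℝ => s ^ (ν - 1)) (𝓝[>] (0:ℝ)) (𝓝 0) := by
    have hc : ContinuousAt (fun s : ℝ => s ^ (ν - 1)) 0 :=
      Real.continuousAt_rpow_const 0 (ν - 1) (Or.inr (by linarith))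
    have h2 : Tendsto (fun s : ℝ => s ^ (ν - 1)) (𝓝[>] (0:ℝ)) (𝓝 ((0:ℝ) ^ (ν - 1))) :=
      tendsto_nhdsWithin_of_tendsto_nhds hc.tendsto
    rwa [Real.zero_rpow (by linarith : ν - 1 ≠ 0)] at h2
  have hφ : Tendsto (fun s : ℝ => (((ρ/ν) * (1 - (1-s)^ν) - (L/ν) * s^ν) / s) * t)
      (𝓝[>] (0:ℝ)) (𝓝 (ρ * t)) := by
    have hψ : Tendsto (fun s : ℝ => ((ρ/ν) * ((1 - (1-s)^ν)/s) - (L/ν) * s^(ν-1)) * t)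
        (𝓝[>] (0:ℝ)) (𝓝 (((ρ/ν) * ν - (L/ν) * 0) * t)) :=
      (((hslope.const_mul (ρ/ν)).sub (hpow.const_mul (L/ν))).mul_const t)
    have heq : ((ρ/ν) * ν - (L/ν) * 0) * t = ρ * t := by field_simp; ring
    rw [heq] at hψ
    refine hψ.congr' ?_
    filter_upwards [self_mem_nhdsWithin] with s hs
    have hs0 : (0:ℝ) < s := hs
    rw [Real.rpow_sub hs0, Real.rpow_one]
    ring
  have hmem : Set.Ioo (0:ℝ) 1 ∈ 𝓝[>] (0:ℝ) :=
    Ioo_mem_nhdsGT_of_mem ⟨le_refl 0, zero_lt_one⟩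
  have hkeyA : ρ * t ≤ c0 :=
    le_of_tendsto hφ (eventually_of_mem hmem key)
  -- Step B : bound on ⟪F' x, xhat - x⟫
  have hB : ⟪F' x, xhat - x⟫ ≤ -(ρ * t) + (2*ℓ/ν) * t := by
    have hA1 := (hHolder x hx xhat hxhat).1
    have hA2 := (hHolder xhat hxhat x hx).1
    rw [norm_sub_rev] at hA1
    rw [← ht_def] at hA1 hA2
    have hinner : ⟪F' xhat, x - xhat⟫ = c0 := rfl
    rw [hinner] at hA1
    have hb : 2 * ℓ / ν * t = -(ℓ / ν) * t * (-2) := by ring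
    linarith [hA2, hA1, hkeyA, hb]
  -- Step C : bound on the model minimum
  set Q : ℝ := ⟪F' x, yQ - x⟫ + (ρ₁ / ν) * ‖yQ - x‖ ^ ν with hQ_def
  have hC : Q ≤ (-ρ + 2*ℓ/ν + ρ₁/ν) * t := by
    have h3 := hyQmin xhat hxhat
    have hb : (-ρ + 2 * ℓ / ν + ρ₁ / ν) * t = -(ρ * t) + 2 * ℓ / ν * t + ρ₁ / ν * t := by
      ring
    linarith [hB, h3, hb]
  -- Final algebra
  have hP : (0:ℝ) < ρ₁ ^ (1 / (ν - 1)) := Real.rpow_pos_of_pos hρ₁ _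
  have hν1' : ν - 1 ≠ 0 := by linarith
  have hRHS : ((ν - 1) / (ν * ρ₁ ^ (1 / (ν - 1)))) *
      (-(ν * ρ₁ ^ (1 / (ν - 1)) / (ν - 1)) * Q) = -Q := by
    field_simp
  rw [hRHS, le_div_iff₀ (by linarith : (0:ℝ) < ρ - (ρ₁ + 2 * ℓ) / ν)]
  have hring : t * (ρ - (ρ₁ + 2 * ℓ) / ν) = -((-ρ + 2*ℓ/ν + ρ₁/ν) * t) := by
    field_simp
    ring
  rw [hring]
  linarith [hC]
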